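/- Let θ ∈ (1/2, 1) and B > 0. Suppose δ_i[k] = 1 for all i and all k (every agent active at every index), so c_i[k] := ∑_{ℓ=0}^k δ_i[ℓ] = k+1, and suppose the step-sizes are α_i[k] = B / (k+1)^θ for all i and k. Suppose the gradient bound and the consensus bound hold. Then p̄_i^{(K)} = 1/n for every i and every K ≥ 1, the minimizer x*_K of the reweighted objective equals x*, and there exists a constant A > 0 such that for every integer K ≥ 1, (1/K) ∑_{k=0}^{K−1} ‖x̄[k] − x*‖² ≤ n( ‖x̄[0] − x*‖² + A ) / (2μB K^{1−θ}). -/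

import Mathlib

open Finset
open scoped RealInnerProductSpace

section Aux
variable {E : Type*} [NormedAddCommGroup E] [InnerProductSpace ℝ E] [CompleteSpace E]

lemma aux_first_order {g : E → ℝ} (hg : Differentiable ℝ g)
    (hc : ConvexOn ℝ Set.univ g) (x y : E) :
    g x + ⟪gradient g x, y - x⟫ ≤ g y := by
  set v := y - x with hv
  have hline : HasDerivAt (fun t : ℝ => x + t • v) v 0 := by
    simpa using ((hasDerivAt_id (0:ℝ)).smul_const v).const_add x
  have hfd : HasFDerivAt g (InnerProductSpace.toDual ℝ E (gradient g x)) (x + (0:ℝ) • v) := by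
    simpa using (hasGradientAt_iff_hasFDerivAt.mp (hg x).hasGradientAt)
  have hφd : HasDerivAt (fun t : ℝ => g (x + t • v)) ⟪gradient g x, v⟫ 0 := by
    simpa only [InnerProductSpace.toDual_apply_apply, Function.comp_def] using hfd.comp_hasDerivAt 0 hline
  have hφc : ConvexOn ℝ Set.univ (fun t : ℝ => g (x + t • v)) := by
    have h := hc.comp_affineMap (AffineMap.lineMap x y : ℝ →ᵃ[ℝ] E)
    simp only [Set.preimage_univ] at h
    convert h using 1
    · rfl
    · rfl
    · rfl
    · rfl
    funext t
    simp only [Function.comp, AffineMap.lineMap_apply_module, hv]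
    congr 1
    module
  have := hφc.le_slope_of_hasDerivAt (Set.mem_univ (0:ℝ)) (Set.mem_univ (1:ℝ))
      one_pos hφd
  rw [slope_def_field] at this
  simp only [one_smul, zero_smul, add_zero] at this
  have h1 : x + v = y := by rw [hv]; abel
  rw [h1] at this
  have : ⟪gradient g x, v⟫ ≤ g y - g x := by
    simpa using this
  linarith

lemma aux_quad_fderiv (μ : ℝ) (x : E) :
    HasFDerivAt (fun y : E => μ / 2 * ‖y‖ ^ 2)
      (InnerProductSpace.toDual ℝ E (μ • x)) x := by
  have h : HasFDerivAt (fun y : E => ‖y‖ ^ 2) (2 • (innerSL ℝ x)) x := by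
    simpa using (hasFDerivAt_id x).norm_sq
  have h2 := h.const_mul (μ / 2)
  convert h2 using 1
  · rfl
  · rfl
  ext w
  simp [InnerProductSpace.toDual_apply_apply, inner_smul_left, real_inner_comm]
  ring

lemma aux_mono {f : E → ℝ} {μ : ℝ} (hf : Differentiable ℝ f)
    (hc : ConvexOn ℝ Set.univ (fun x => f x - μ / 2 * ‖x‖ ^ 2)) (x y : E) :
    μ * ‖x - y‖ ^ 2 ≤ ⟪gradient f x - gradient f y, x - y⟫ := by
  set g : E → ℝ := fun x => f x - μ / 2 * ‖x‖ ^ 2 with hgdef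
  have hgrad : ∀ w : E, HasGradientAt g (gradient f w - μ • w) w := by
    intro w
    rw [hasGradientAt_iff_hasFDerivAt, map_sub]
    exact (hasGradientAt_iff_hasFDerivAt.mp (hf w).hasGradientAt).sub (aux_quad_fderiv μ w)
  have hgd : Differentiable ℝ g := fun w => (hgrad w).differentiableAt
  have h1 := aux_first_order hgd hc x y
  have h2 := aux_first_order hgd hc y x
  rw [(hgrad x).gradient] at h1
  rw [(hgrad y).gradient] at h2
  have e1 : ⟪gradient f x - μ • x, y - x⟫ + ⟪gradient f y - μ • y, x - y⟫ ≤ 0 := by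
    linarith
  have e2 : ⟪gradient f x - μ • x, y - x⟫ + ⟪gradient f y - μ • y, x - y⟫
      = -⟪gradient f x - gradient f y, x - y⟫ + μ * ‖x - y‖ ^ 2 := by
    simp only [inner_sub_left, inner_sub_right, inner_smul_left, conj_trivial,
      real_inner_self_eq_norm_sq, norm_sub_sq_real, real_inner_comm y x]
    ring
  linarith [e1, e2.symm ▸ e1]

lemma aux_sum_grad_zero {n : ℕ} (f : Fin n → E → ℝ) (hdiff : ∀ i, Differentiable ℝ (f i))
    (xstar : E) (hxstar : ∀ y, ∑ i, f i xstar ≤ ∑ i, f i y) :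
    ∑ i, gradient (f i) xstar = 0 := by
  have hmin : IsLocalMin (fun x => ∑ i, f i x) xstar := Filter.Eventually.of_forall hxstar
  have hF : HasFDerivAt (fun x => ∑ i, f i x)
      (∑ i, InnerProductSpace.toDual ℝ E (gradient (f i) xstar)) xstar :=
    HasFDerivAt.fun_sum (fun i _ => hasGradientAt_iff_hasFDerivAt.mp (hdiff i xstar).hasGradientAt)
  have h0 : (∑ i, InnerProductSpace.toDual ℝ E (gradient (f i) xstar)) = 0 := by
    rw [← hF.fderiv]; exact hmin.fderiv_eq_zero
  rw [← map_sum (InnerProductSpace.toDual ℝ E)] at h0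
  exact (LinearIsometryEquiv.map_eq_zero_iff _).mp h0

omit [CompleteSpace E] in
lemma aux_unique {n : ℕ} (hn : 1 ≤ n) {μ : ℝ} (hμ : 0 < μ) (f : Fin n → E → ℝ)
    (hsc : ∀ i, ConvexOn ℝ Set.univ (fun x => f i x - μ / 2 * ‖x‖ ^ 2))
    (x y : E) (hx : ∀ w, ∑ i, f i x ≤ ∑ i, f i w) (hy : ∀ w, ∑ i, f i y ≤ ∑ i, f i w) :
    x = y := by
  set m := (1/2 : ℝ) • x + (1/2 : ℝ) • y with hmdef
  have hi : ∀ i, f i m - μ/2 * ‖m‖^2 ≤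
      1/2 * (f i x - μ/2 * ‖x‖^2) + 1/2 * (f i y - μ/2 * ‖y‖^2) := by
    intro i
    have h := (hsc i).2 (Set.mem_univ x) (Set.mem_univ y)
      (by norm_num : (0:ℝ) ≤ 1/2) (by norm_num : (0:ℝ) ≤ 1/2) (by norm_num)
    simpa only [smul_eq_mul] using h
  have hsum := Finset.sum_le_sum (fun i (_ : i ∈ Finset.univ) => hi i)
  simp only [Finset.sum_sub_distrib, Finset.sum_const, Finset.card_univ, Fintype.card_fin,
    nsmul_eq_mul, Finset.sum_add_distrib, ← Finset.mul_sum] at hsum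
  have hm : ‖m‖^2 = 1/2*‖x‖^2 + 1/2*‖y‖^2 - 1/4*‖x-y‖^2 := by
    have h1 : ‖m‖^2 = 1/4 * ‖x + y‖^2 := by
      rw [hmdef, ← smul_add, norm_smul, Real.norm_eq_abs,
        abs_of_pos (by norm_num : (0:ℝ) < 1/2)]
      ring
    rw [h1, norm_add_sq_real, norm_sub_sq_real]; ring
  have hP : ∑ i, f i y = ∑ i, f i x := le_antisymm (hy x) (hx y)
  have hPm : ∑ i, f i x ≤ ∑ i, f i m := hx m
  have hn' : (1:ℝ) ≤ (n:ℝ) := by exact_mod_cast hn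
  have hzero : ‖x - y‖^2 ≤ 0 := by
    rw [hm] at hsum
    nlinarith [hsum, hPm, hP, hμ,
      mul_le_mul_of_nonneg_left hn' (by positivity : (0:ℝ) ≤ μ * ‖x - y‖ ^ 2)]
  have : ‖x - y‖ = 0 := by nlinarith [sq_nonneg ‖x - y‖, norm_nonneg (x - y)]
  exact sub_eq_zero.mp (norm_eq_zero.mp this)

end Aux

lemma aux_geom {q : ℝ} (h0 : 0 ≤ q) (h1 : q < 1) (K : ℕ) :
    ∑ k ∈ Finset.range K, q ^ k ≤ (1 - q)⁻¹ := by
  have key : (q^K - 1)/(q-1) = (1 - q^K)/(1-q) := by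
    rw [div_eq_div_iff (by linarith) (by linarith)]; ring
  rw [geom_sum_eq (ne_of_lt h1), key, div_le_iff₀ (by linarith : (0:ℝ) < 1-q),
    inv_mul_cancel₀ (by linarith : (1:ℝ)-q ≠ 0)]
  nlinarith [pow_nonneg h0 K]

lemma aux_swap (K : ℕ) (g : ℕ → ℕ → ℝ) :
    ∑ k ∈ Finset.range K, ∑ s ∈ Finset.range (k+1), g k s
      = ∑ s ∈ Finset.range K, ∑ k ∈ Finset.Ico s K, g k s := by
  apply Finset.sum_comm'
  intro k s
  simp only [Finset.mem_range, Finset.mem_Ico]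
  omega

lemma aux_summable {p : ℝ} (hp : 1 < p) :
    Summable (fun s : ℕ => (((s:ℝ)+1) ^ p)⁻¹) := by
  have h := (Real.summable_nat_rpow_inv.mpr hp)
  have h2 := h.comp_injective (add_left_injective 1)
  convert h2 using 2 with s
  · rfl
  simp [Function.comp]

set_option maxHeartbeats 2000000 in
/-- Corollary (semi-synchronous gradient push, diminishing step-size): with all agents
active at every index and `α_i[k] = B/(k+1)^θ`, the weights satisfy `p̄_i^{(K)} = 1/n`,
the minimizer of the reweighted objective equals `x*`, and there exists `A > 0` with
`(1/K) ∑_{k<K} ‖x̄[k] − x*‖² ≤ n(‖x̄[0] − x*‖² + A)/(2μB K^{1−θ})` for all `K ≥ 1`. -/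
theorem stmt_13
    {n d : ℕ} (hn : 1 ≤ n) (hd : 1 ≤ d)
    {μ M : ℝ} (hμ : 0 < μ) (hμM : μ ≤ M)
    (f : Fin n → EuclideanSpace ℝ (Fin d) → ℝ)
    (hdiff : ∀ i, Differentiable ℝ (f i))
    (hsc : ∀ i, ConvexOn ℝ Set.univ (fun x => f i x - μ / 2 * ‖x‖ ^ 2))
    (hlip : ∀ i x y, ‖gradient (f i) x - gradient (f i) y‖ ≤ M * ‖x - y‖)
    (xstar : EuclideanSpace ℝ (Fin d))
    (hxstar : ∀ y, ∑ i, f i xstar ≤ ∑ i, f i y)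
    {θ B : ℝ} (hθ : θ ∈ Set.Ioo (1/2 : ℝ) 1) (hB : 0 < B)
    (δ : Fin n → ℕ → ℕ) (hδ : ∀ i k, δ i k = 1)
    (α : Fin n → ℕ → ℝ) (hα : ∀ i k, α i k = B / ((k : ℝ) + 1) ^ θ)
    (z : Fin n → ℕ → EuclideanSpace ℝ (Fin d))
    (xbar : ℕ → EuclideanSpace ℝ (Fin d))
    (hrec : ∀ k, xbar (k + 1) =
      xbar k - ((n : ℝ))⁻¹ • ∑ i, (α i k * (δ i k : ℝ)) • gradient (f i) (z i k))
    (L : ℝ) (hL : 0 < L)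
    (hgradz : ∀ i k, ‖gradient (f i) (z i k)‖ ≤ L)
    (hgradx : ∀ i k, ‖gradient (f i) (xbar k)‖ ≤ L)
    (C q : ℝ) (hC : 0 < C) (hq : q ∈ Set.Ioo (0:ℝ) 1)
    (a : Fin n → ℝ) (ha : ∀ i, 0 ≤ a i)
    (hcons : ∀ i k, ‖z i k - xbar k‖ ≤
      C * q ^ k * a i +
        C * L * ∑ s ∈ Finset.range (k + 1), q ^ (k - s) * (α i s * (δ i s : ℝ))) :
    (∀ K : ℕ, 1 ≤ K → ∀ i,
      (∑ k ∈ Finset.range K, α i k * (δ i k : ℝ)) /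
        (∑ j, ∑ k ∈ Finset.range K, α j k * (δ j k : ℝ)) = 1 / (n : ℝ)) ∧
    (∀ K : ℕ, 1 ≤ K → ∀ xK : EuclideanSpace ℝ (Fin d),
      (∀ y, ∑ i, ((∑ k ∈ Finset.range K, α i k * (δ i k : ℝ)) /
              (∑ j, ∑ k ∈ Finset.range K, α j k * (δ j k : ℝ))) * f i xK ≤
            ∑ i, ((∑ k ∈ Finset.range K, α i k * (δ i k : ℝ)) /
              (∑ j, ∑ k ∈ Finset.range K, α j k * (δ j k : ℝ))) * f i y) →
      xK = xstar) ∧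
    ∃ A : ℝ, 0 < A ∧
      ∀ K : ℕ, 1 ≤ K →
        (1 / (K : ℝ)) * ∑ k ∈ Finset.range K, ‖xbar k - xstar‖ ^ 2 ≤
          (n : ℝ) * (‖xbar 0 - xstar‖ ^ 2 + A) / (2 * μ * B * (K : ℝ) ^ (1 - θ)) := by
  obtain ⟨hθ1, hθ2⟩ := hθ
  obtain ⟨hq0, hq1⟩ := hq
  have hn0 : (0:ℝ) < n := by exact_mod_cast hn
  have hθpos : (0:ℝ) < θ := by linarith
  set β : ℕ → ℝ := fun k => B / ((k:ℝ)+1)^θ with hβ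
  have hrpos : ∀ k : ℕ, (0:ℝ) < ((k:ℝ)+1)^θ :=
    fun k => Real.rpow_pos_of_pos (by positivity) θ
  have hβpos : ∀ k, 0 < β k := fun k => div_pos hB (hrpos k)
  have hβB : ∀ k, β k ≤ B := by
    intro k
    have h1 : (1:ℝ) ≤ ((k:ℝ)+1)^θ := by
      calc (1:ℝ) = (1:ℝ)^θ := (Real.one_rpow θ).symm
        _ ≤ ((k:ℝ)+1)^θ := Real.rpow_le_rpow (by norm_num) (by have := Nat.cast_nonneg (α := ℝ) k; linarith) hθpos.le
    rw [hβ]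
    calc B / ((k:ℝ)+1)^θ ≤ B / 1 := div_le_div_of_nonneg_left hB.le one_pos h1
      _ = B := div_one B
  have hβmono : ∀ s k : ℕ, s ≤ k → β k ≤ β s := by
    intro s k hsk
    have hsk' : ((s:ℝ)+1) ≤ ((k:ℝ)+1) := by
      have := (Nat.cast_le (α := ℝ)).mpr hsk; linarith
    have h1 : ((s:ℝ)+1)^θ ≤ ((k:ℝ)+1)^θ :=
      Real.rpow_le_rpow (by positivity) hsk' hθpos.le
    exact div_le_div_of_nonneg_left hB.le (hrpos s) h1
  -- Part 1
  have hSval : ∀ (i : Fin n) (K : ℕ),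
      (∑ k ∈ Finset.range K, α i k * (δ i k : ℝ)) = ∑ k ∈ Finset.range K, β k := by
    intro i K
    refine Finset.sum_congr rfl (fun k _ => ?_)
    rw [hα, hδ, hβ]; norm_num
  have part1 : ∀ K : ℕ, 1 ≤ K → ∀ i : Fin n,
      (∑ k ∈ Finset.range K, α i k * (δ i k : ℝ)) /
        (∑ j, ∑ k ∈ Finset.range K, α j k * (δ j k : ℝ)) = 1 / (n : ℝ) := by
    intro K hK i
    have hS : 0 < ∑ k ∈ Finset.range K, β k :=
      Finset.sum_pos (fun k _ => hβpos k) (Finset.nonempty_range_iff.mpr (by omega))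
    have hden : (∑ j, ∑ k ∈ Finset.range K, α j k * (δ j k : ℝ))
        = (n:ℝ) * ∑ k ∈ Finset.range K, β k := by
      rw [Finset.sum_congr rfl (fun j _ => hSval j K), Finset.sum_const,
        Finset.card_univ, Fintype.card_fin, nsmul_eq_mul]
    rw [hSval i, hden, div_eq_div_iff (by positivity) hn0.ne']
    ring
  refine ⟨part1, ?_, ?_⟩
  -- Part 2
  · intro K hK xK hmin
    simp only [part1 K hK] at hmin
    have hminK : ∀ y, ∑ i, f i xK ≤ ∑ i, f i y := by
      intro y
      have h := hmin y
      rw [← Finset.mul_sum, ← Finset.mul_sum] at h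
      exact (mul_le_mul_iff_right₀ (by positivity : (0:ℝ) < 1/(n:ℝ))).mp h
    exact aux_unique hn hμ f hsc xK xstar hminK hxstar
  -- Part 3
  · have hM : (0:ℝ) < M := lt_of_lt_of_le hμ hμM
    set R : ℝ := L / μ with hRdef
    have hR : 0 < R := div_pos hL hμ
    have hsum2θ : Summable (fun s : ℕ => (((s:ℝ)+1) ^ (2*θ))⁻¹) :=
      aux_summable (by linarith)
    set T := ∑' s : ℕ, (((s:ℝ)+1) ^ (2*θ))⁻¹ with hTdef
    have hTnn : 0 ≤ T := tsum_nonneg (fun s => by positivity)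
    have hTpart : ∀ K : ℕ, ∑ s ∈ Finset.range K, (((s:ℝ)+1)^(2*θ))⁻¹ ≤ T :=
      fun K => Summable.sum_le_tsum (Finset.range K) (fun s _ => by positivity) hsum2θ
    have hβsq : ∀ k : ℕ, (β k)^2 = B^2 * (((k:ℝ)+1)^(2*θ))⁻¹ := by
      intro k
      have h2 : (((k:ℝ)+1)^θ)^(2:ℕ) = ((k:ℝ)+1)^(2*θ) := by
        rw [← Real.rpow_natCast (((k:ℝ)+1)^θ) 2, ← Real.rpow_mul (by positivity)]
        norm_num [mul_comm θ 2]
      rw [hβ, div_pow, h2, div_eq_mul_inv]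
    set abar : ℝ := (n:ℝ)⁻¹ * ∑ i, a i with habar_def
    have habar : 0 ≤ abar :=
      mul_nonneg (by positivity) (Finset.sum_nonneg (fun i _ => ha i))
    have h1q : (0:ℝ) < (1-q)⁻¹ := by
      apply inv_pos.mpr; linarith
    have hsa : 0 ≤ ∑ i, a i := Finset.sum_nonneg (fun i _ => ha i)
    set A1 : ℝ := (n:ℝ)⁻¹ * (C*(∑ i, a i)*B*(1-q)⁻¹ + (n:ℝ)*(C*L*((1-q)⁻¹*(B^2*T)))) with hA1def
    have hA1 : 0 ≤ A1 := by
      apply mul_nonneg (inv_nonneg.mpr hn0.le)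
      apply add_nonneg
      · exact mul_nonneg (mul_nonneg (mul_nonneg hC.le hsa) hB.le) h1q.le
      · apply mul_nonneg hn0.le
        apply mul_nonneg (mul_nonneg hC.le hL.le)
        exact mul_nonneg h1q.le (mul_nonneg (sq_nonneg B) hTnn)
    set A : ℝ := 2*M*R*A1 + L^2*(B^2*T) + 1 with hAdef
    have hA : 0 < A := by
      have h1 : 0 ≤ 2*M*R*A1 := by positivity
      have h2 : 0 ≤ L^2*(B^2*T) := by positivity
      linarith
    refine ⟨A, hA, ?_⟩
    intro K hK
    set e : ℕ → ℝ := fun k => ‖xbar k - xstar‖^2 with hedef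
    have he0 : ∀ k, 0 ≤ e k := fun k => by simp only [hedef]; positivity
    have hmono' : ∀ (i : Fin n) (x y : EuclideanSpace ℝ (Fin d)),
        μ * ‖x - y‖^2 ≤ ⟪gradient (f i) x - gradient (f i) y, x - y⟫ :=
      fun i => aux_mono (hdiff i) (hsc i)
    have hgrad0 : ∑ i, gradient (f i) xstar = 0 := aux_sum_grad_zero f hdiff xstar hxstar
    have hwbound : ∀ k, ‖xbar k - xstar‖ ≤ R := by
      intro k
      rcases eq_or_lt_of_le (norm_nonneg (xbar k - xstar)) with h | hpos
      · rw [← h]; exact hR.le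
      have h1 : (n:ℝ) * (μ * ‖xbar k - xstar‖^2)
          ≤ ∑ i, ⟪gradient (f i) (xbar k) - gradient (f i) xstar, xbar k - xstar⟫ := by
        have := Finset.card_nsmul_le_sum Finset.univ
          (fun i => ⟪gradient (f i) (xbar k) - gradient (f i) xstar, xbar k - xstar⟫)
          (μ * ‖xbar k - xstar‖^2) (fun i _ => hmono' i (xbar k) xstar)
        simpa [Finset.card_univ, nsmul_eq_mul] using this
      have h2 : ∑ i, ⟪gradient (f i) (xbar k) - gradient (f i) xstar, xbar k - xstar⟫
          ≤ (n:ℝ) * (L * ‖xbar k - xstar‖) := by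
        rw [← sum_inner, Finset.sum_sub_distrib, hgrad0, sub_zero]
        calc ⟪∑ i, gradient (f i) (xbar k), xbar k - xstar⟫
            ≤ ‖∑ i, gradient (f i) (xbar k)‖ * ‖xbar k - xstar‖ := real_inner_le_norm _ _
          _ ≤ ((n:ℝ) * L) * ‖xbar k - xstar‖ := by
              apply mul_le_mul_of_nonneg_right _ (norm_nonneg _)
              calc ‖∑ i, gradient (f i) (xbar k)‖
                  ≤ ∑ i, ‖gradient (f i) (xbar k)‖ := norm_sum_le _ _
                _ ≤ (n:ℝ) * L := by
                    have := Finset.sum_le_card_nsmul Finset.univ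
                      (fun i => ‖gradient (f i) (xbar k)‖) L (fun i _ => hgradx i k)
                    simpa [Finset.card_univ, nsmul_eq_mul] using this
          _ = (n:ℝ) * (L * ‖xbar k - xstar‖) := by ring
      rw [hRdef, le_div_iff₀ hμ]
      nlinarith [h1, h2, hpos, hn0, mul_pos hn0 hpos]
    set g : ℕ → EuclideanSpace ℝ (Fin d) :=
      fun k => (n:ℝ)⁻¹ • ∑ i, gradient (f i) (z i k) with hgdef
    have hrec' : ∀ k, xbar (k+1) - xstar = (xbar k - xstar) - β k • g k := by
      intro k
      rw [hrec k]
      have hs : (∑ i, (α i k * (δ i k : ℝ)) • gradient (f i) (z i k))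
          = β k • ∑ i, gradient (f i) (z i k) := by
        rw [Finset.smul_sum]
        refine Finset.sum_congr rfl (fun i _ => ?_)
        rw [hα, hδ, hβ]; norm_num
      rw [hs, hgdef, smul_comm ((n:ℝ)⁻¹) (β k)]
      abel
    have hgnorm : ∀ k, ‖g k‖ ≤ L := by
      intro k
      simp only [hgdef]
      calc ‖(n:ℝ)⁻¹ • ∑ i, gradient (f i) (z i k)‖
          = (n:ℝ)⁻¹ * ‖∑ i, gradient (f i) (z i k)‖ := by
            rw [norm_smul, Real.norm_eq_abs, abs_of_pos (by positivity)]
        _ ≤ (n:ℝ)⁻¹ * ((n:ℝ) * L) := by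
            apply mul_le_mul_of_nonneg_left _ (by positivity)
            calc ‖∑ i, gradient (f i) (z i k)‖
                ≤ ∑ i, ‖gradient (f i) (z i k)‖ := norm_sum_le _ _
              _ ≤ (n:ℝ) * L := by
                  have := Finset.sum_le_card_nsmul Finset.univ
                    (fun i => ‖gradient (f i) (z i k)‖) L (fun i _ => hgradz i k)
                  simpa [Finset.card_univ, nsmul_eq_mul] using this
        _ = L := by field_simp
    set N : ℕ → ℝ := fun k => ∑ i, ‖z i k - xbar k‖ with hNdef
    set W : ℕ → ℝ := fun k => ∑ s ∈ Finset.range (k+1), q^(k-s) * β s with hWdef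
    have hWnn : ∀ k, 0 ≤ W k := by
      intro k
      simp only [hWdef]
      exact Finset.sum_nonneg fun s _ => mul_nonneg (pow_nonneg hq0.le _) (hβpos s).le
    have hNb : ∀ k, N k ≤ C*q^k*(∑ i, a i) + (n:ℝ)*(C*L*W k) := by
      intro k
      have hterm : ∀ i : Fin n, ‖z i k - xbar k‖ ≤ C*q^k*a i + C*L*W k := by
        intro i
        have h := hcons i k
        have hin : (∑ s ∈ Finset.range (k+1), q^(k-s) * (α i s * (δ i s : ℝ))) = W k := by
          simp only [hWdef]
          refine Finset.sum_congr rfl (fun s _ => ?_)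
          rw [hα, hδ, hβ]; norm_num
        rwa [hin] at h
      have hsum := Finset.sum_le_sum (fun i (_ : i ∈ Finset.univ) => hterm i)
      rw [Finset.sum_add_distrib, Finset.sum_const, Finset.card_univ, Fintype.card_fin,
        nsmul_eq_mul, ← Finset.mul_sum] at hsum
      exact hsum
    have hinner : ∀ k, μ * e k - (n:ℝ)⁻¹*(M*R*(N k)) ≤ ⟪g k, xbar k - xstar⟫ := by
      intro k
      have key : ∀ i : Fin n,
          μ * e k - M*R*‖z i k - xbar k‖
            ≤ ⟪gradient (f i) (z i k), xbar k - xstar⟫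
              - ⟪gradient (f i) xstar, xbar k - xstar⟫ := by
        intro i
        simp only [hedef]
        have h1 := hmono' i (xbar k) xstar
        have h2 : |⟪gradient (f i) (z i k) - gradient (f i) (xbar k), xbar k - xstar⟫|
            ≤ M * ‖z i k - xbar k‖ * R := by
          calc |⟪gradient (f i) (z i k) - gradient (f i) (xbar k), xbar k - xstar⟫|
              ≤ ‖gradient (f i) (z i k) - gradient (f i) (xbar k)‖ * ‖xbar k - xstar‖ :=
                abs_real_inner_le_norm _ _
            _ ≤ (M * ‖z i k - xbar k‖) * R :=
                mul_le_mul (hlip i _ _) (hwbound k) (norm_nonneg _)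
                  (by positivity)
        have h2' := neg_le_of_abs_le h2
        have e3 : ⟪gradient (f i) (z i k), xbar k - xstar⟫
              - ⟪gradient (f i) xstar, xbar k - xstar⟫
            = ⟪gradient (f i) (xbar k) - gradient (f i) xstar, xbar k - xstar⟫
              + ⟪gradient (f i) (z i k) - gradient (f i) (xbar k), xbar k - xstar⟫ := by
          simp only [inner_sub_left]; ring
        rw [e3]
        linarith
      have hsumkey := Finset.sum_le_sum (fun i (_ : i ∈ Finset.univ) => key i)
      rw [Finset.sum_sub_distrib, Finset.sum_sub_distrib, Finset.sum_const, Finset.card_univ,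
        Fintype.card_fin, nsmul_eq_mul, ← Finset.mul_sum, ← sum_inner, ← sum_inner, hgrad0,
        inner_zero_left, sub_zero] at hsumkey
      have hinner_eq : ⟪g k, xbar k - xstar⟫
          = (n:ℝ)⁻¹ * ⟪∑ i, gradient (f i) (z i k), xbar k - xstar⟫ := by
        simp only [hgdef]
        exact real_inner_smul_left _ _ _
      have heq2 : μ * e k - (n:ℝ)⁻¹*(M*R*(N k))
          = (n:ℝ)⁻¹ * ((n:ℝ)*(μ*e k) - M*R*(N k)) := by
        field_simp [hn0.ne']
      rw [hinner_eq, heq2]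
      exact mul_le_mul_of_nonneg_left hsumkey (by positivity)
    have hstep : ∀ k, e (k+1) ≤ e k - 2*β k*(μ*e k - (n:ℝ)⁻¹*(M*R*(N k))) + (β k)^2*L^2 := by
      intro k
      have hexp : e (k+1) = e k - 2*(β k * ⟪g k, xbar k - xstar⟫) + (β k)^2*‖g k‖^2 := by
        simp only [hedef]
        rw [hrec' k, norm_sub_sq_real, real_inner_smul_right, norm_smul, mul_pow,
          Real.norm_eq_abs, sq_abs, real_inner_comm (xbar k - xstar) (g k)]
        try ring
      have h1 := hinner k
      have h2 : ‖g k‖^2 ≤ L^2 := by nlinarith [hgnorm k, norm_nonneg (g k)]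
      rw [hexp]
      have h3 := mul_le_mul_of_nonneg_left h1 (hβpos k).le
      have h4 := mul_le_mul_of_nonneg_left h2 (sq_nonneg (β k))
      nlinarith [h3, h4]
    have hstep2 : ∀ k, 2*μ*(β k * e k)
        ≤ (e k - e (k+1)) + (2*M*R*((n:ℝ)⁻¹*(β k * N k)) + L^2*(β k)^2) := by
      intro k
      nlinarith [hstep k]
    -- bounds on the error sums
    have hS2 : ∑ k ∈ Finset.range K, (β k)^2 ≤ B^2*T := by
      have h1 : ∑ k ∈ Finset.range K, (β k)^2
          = B^2 * ∑ k ∈ Finset.range K, (((k:ℝ)+1)^(2*θ))⁻¹ := by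
        rw [Finset.mul_sum]; exact Finset.sum_congr rfl (fun k _ => hβsq k)
      rw [h1]
      exact mul_le_mul_of_nonneg_left (hTpart K) (sq_nonneg B)
    have hdouble : ∑ k ∈ Finset.range K, β k * W k ≤ (1-q)⁻¹*(B^2*T) := by
      have hterm : ∀ k ∈ Finset.range K,
          β k * W k ≤ ∑ s ∈ Finset.range (k+1), q^(k-s)*(β s)^2 := by
        intro k _
        simp only [hWdef]
        rw [Finset.mul_sum]
        refine Finset.sum_le_sum (fun s hs => ?_)
        have hs' : s ≤ k := by
          have := Finset.mem_range.mp hs; omega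
        nlinarith [mul_le_mul_of_nonneg_right (hβmono s k hs')
          (mul_nonneg (pow_nonneg hq0.le (k-s)) (hβpos s).le)]
      calc ∑ k ∈ Finset.range K, β k * W k
          ≤ ∑ k ∈ Finset.range K, ∑ s ∈ Finset.range (k+1), q^(k-s)*(β s)^2 :=
            Finset.sum_le_sum hterm
        _ = ∑ s ∈ Finset.range K, ∑ k ∈ Finset.Ico s K, q^(k-s)*(β s)^2 :=
            aux_swap K (fun k s => q^(k-s)*(β s)^2)
        _ ≤ ∑ s ∈ Finset.range K, (1-q)⁻¹*(β s)^2 := by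
            refine Finset.sum_le_sum (fun s _ => ?_)
            rw [← Finset.sum_mul]
            refine mul_le_mul_of_nonneg_right ?_ (sq_nonneg (β s))
            rw [Finset.sum_Ico_eq_sum_range]
            simp only [Nat.add_sub_cancel_left]
            exact aux_geom hq0.le hq1 _
        _ = (1-q)⁻¹ * ∑ s ∈ Finset.range K, (β s)^2 := by rw [Finset.mul_sum]
        _ ≤ (1-q)⁻¹*(B^2*T) := mul_le_mul_of_nonneg_left hS2 h1q.le
    have hβN : ∀ k, β k * N k ≤ (C*(∑ i, a i)*B)*q^k + (n:ℝ)*(C*L*(β k * W k)) := by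
      intro k
      have h := mul_le_mul_of_nonneg_left (hNb k) (hβpos k).le
      have hq_k : (0:ℝ) ≤ q^k := pow_nonneg hq0.le k
      have hint := mul_le_mul_of_nonneg_left (hβB k)
        (mul_nonneg (mul_nonneg hC.le hq_k) hsa)
      nlinarith [h, hint]
    have hβNsum : ∑ k ∈ Finset.range K, β k * N k
        ≤ C*(∑ i, a i)*B*(1-q)⁻¹ + (n:ℝ)*(C*L*((1-q)⁻¹*(B^2*T))) := by
      calc ∑ k ∈ Finset.range K, β k * N k
          ≤ ∑ k ∈ Finset.range K, ((C*(∑ i, a i)*B)*q^k + (n:ℝ)*(C*L*(β k * W k))) :=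
            Finset.sum_le_sum (fun k _ => hβN k)
        _ = (C*(∑ i, a i)*B)*(∑ k ∈ Finset.range K, q^k)
            + (n:ℝ)*(C*L*(∑ k ∈ Finset.range K, β k * W k)) := by
            rw [Finset.sum_add_distrib, ← Finset.mul_sum, ← Finset.mul_sum, ← Finset.mul_sum]
        _ ≤ (C*(∑ i, a i)*B)*(1-q)⁻¹ + (n:ℝ)*(C*L*((1-q)⁻¹*(B^2*T))) := by
            refine add_le_add ?_ ?_
            · exact mul_le_mul_of_nonneg_left (aux_geom hq0.le hq1 K)
                (mul_nonneg (mul_nonneg hC.le hsa) hB.le)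
            · refine mul_le_mul_of_nonneg_left ?_ hn0.le
              exact mul_le_mul_of_nonneg_left hdouble (mul_nonneg hC.le hL.le)
    have hDsum : ∑ k ∈ Finset.range K, (n:ℝ)⁻¹*(β k * N k) ≤ A1 := by
      rw [← Finset.mul_sum, hA1def]
      exact mul_le_mul_of_nonneg_left hβNsum (inv_nonneg.mpr hn0.le)
    -- summing the per-step inequality
    have hsumstep : 2*μ*(∑ k ∈ Finset.range K, β k * e k)
        ≤ (e 0 - e K) + (2*M*R*(∑ k ∈ Finset.range K, (n:ℝ)⁻¹*(β k * N k))
            + L^2*(∑ k ∈ Finset.range K, (β k)^2)) := by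
      calc 2*μ*(∑ k ∈ Finset.range K, β k * e k)
          = ∑ k ∈ Finset.range K, 2*μ*(β k * e k) := by rw [Finset.mul_sum]
        _ ≤ ∑ k ∈ Finset.range K, ((e k - e (k+1))
              + (2*M*R*((n:ℝ)⁻¹*(β k * N k)) + L^2*(β k)^2)) :=
            Finset.sum_le_sum (fun k (_ : k ∈ Finset.range K) => hstep2 k)
        _ = (e 0 - e K) + (2*M*R*(∑ k ∈ Finset.range K, (n:ℝ)⁻¹*(β k * N k))
            + L^2*(∑ k ∈ Finset.range K, (β k)^2)) := by
            rw [Finset.sum_add_distrib, Finset.sum_add_distrib, Finset.sum_range_sub' e,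
              Finset.mul_sum, Finset.mul_sum]
    have hmain : 2*μ*(∑ k ∈ Finset.range K, β k * e k) ≤ e 0 + A := by
      have hb1 := mul_le_mul_of_nonneg_left hDsum
        (by positivity : (0:ℝ) ≤ 2*M*R)
      have hb2 := mul_le_mul_of_nonneg_left hS2 (sq_nonneg L)
      have heK := he0 K
      simp only [hAdef]
      linarith
    -- lower-bounding the step sizes
    have hKpos : (0:ℝ) < (K:ℝ) := by
      have : (1:ℝ) ≤ (K:ℝ) := by exact_mod_cast hK
      linarith
    have hKθ : (0:ℝ) < (K:ℝ)^θ := Real.rpow_pos_of_pos hKpos θ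
    have hβlow : ∀ k ∈ Finset.range K, B/(K:ℝ)^θ ≤ β k := by
      intro k hk
      have hk1 : ((k:ℝ)+1) ≤ (K:ℝ) := by
        have := Finset.mem_range.mp hk
        exact_mod_cast Nat.succ_le_of_lt this
      have h1 : ((k:ℝ)+1)^θ ≤ (K:ℝ)^θ :=
        Real.rpow_le_rpow (by positivity) hk1 hθpos.le
      exact div_le_div_of_nonneg_left hB.le (hrpos k) h1
    have hlow : (B/(K:ℝ)^θ) * (∑ k ∈ Finset.range K, e k)
        ≤ ∑ k ∈ Finset.range K, β k * e k := by
      rw [Finset.mul_sum]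
      exact Finset.sum_le_sum (fun k hk =>
        mul_le_mul_of_nonneg_right (hβlow k hk) (he0 k))
    have hchain : 2*μ*((B/(K:ℝ)^θ) * ∑ k ∈ Finset.range K, e k) ≤ e 0 + A := by
      have := mul_le_mul_of_nonneg_left hlow (by positivity : (0:ℝ) ≤ 2*μ)
      linarith
    have hfin : 2*μ*B*(∑ k ∈ Finset.range K, e k) ≤ (e 0 + A)*(K:ℝ)^θ := by
      have heq : 2*μ*B*(∑ k ∈ Finset.range K, e k)
          = (2*μ*((B/(K:ℝ)^θ) * ∑ k ∈ Finset.range K, e k))*(K:ℝ)^θ := by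
        field_simp [hKθ.ne']
        try ring
      rw [heq]
      exact mul_le_mul_of_nonneg_right hchain hKθ.le
    -- final conversion
    have hrhs : (n:ℝ)*(e 0 + A)/(2*μ*B*(K:ℝ)^(1-θ))
        = (n:ℝ)*((e 0 + A)*(K:ℝ)^θ)/(2*μ*B*(K:ℝ)) := by
      rw [Real.rpow_sub hKpos, Real.rpow_one]
      field_simp [hKθ.ne', hμ.ne', hB.ne', hKpos.ne']
    rw [hrhs, le_div_iff₀ (by positivity : (0:ℝ) < 2*μ*B*(K:ℝ))]
    have hsimp : 1/(K:ℝ) * (∑ k ∈ Finset.range K, e k) * (2*μ*B*(K:ℝ))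
        = 2*μ*B*(∑ k ∈ Finset.range K, e k) := by
      field_simp
    rw [hsimp]
    have hn' : (1:ℝ) ≤ (n:ℝ) := by exact_mod_cast hn
    have hnonneg : (0:ℝ) ≤ (e 0 + A)*(K:ℝ)^θ :=
      mul_nonneg (by linarith [he0 0, hA]) hKθ.le
    calc 2*μ*B*(∑ k ∈ Finset.range K, e k) ≤ (e 0 + A)*(K:ℝ)^θ := hfin
      _ ≤ (n:ℝ)*((e 0 + A)*(K:ℝ)^θ) := le_mul_of_one_le_left hnonneg hn'
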